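/- In the I-GMANOVA setup, let R̂₀ = K⁻¹(S_c + S_c^{1/2} P_{A₀}^⊥ Z_{W1} P_{C†} Z_{W1}† P_{A₀}^⊥ S_c^{1/2}), which is Hermitian positive definite, define Z_{d,0} = Z − S_c^{1/2} P_{A₀} S_c^{-1/2} Z P_{C†}, Z_{W0} = R̂₀^{-1/2} Z, and Ā₀ = R̂₀^{-1/2} E_t. Then R̂₀^{-1/2} Z_{d,0} P_{C†} = P_{Ā₀}^⊥ Z_{W0} P_{C†}. -/

import Mathlib

open Matrix
open scoped ComplexOrder
noncomputable section

/-- Orthogonal projector onto the column space of `F`: `P_F = F (Fᴴ F)⁻¹ Fᴴ`. -/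
def proj {n m : Type*} [Fintype n] [Fintype m] [DecidableEq n] [DecidableEq m]
    (F : Matrix n m ℂ) : Matrix n n ℂ :=
  F * (Fᴴ * F)⁻¹ * Fᴴ

/-- Complementary projector `P_F^⊥ = I - P_F`. -/
def projPerp {n m : Type*} [Fintype n] [Fintype m] [DecidableEq n] [DecidableEq m]
    (F : Matrix n m ℂ) : Matrix n n ℂ :=
  1 - proj F

/-- The square root of a positive semidefinite matrix, as `Matrix.PosSemidef.sqrt` was defined in
Mathlib (December 2024); it has since been removed from Mathlib. -/
def Matrix.PosSemidef.sqrt {n 𝕜 : Type*} [Fintype n] [RCLike 𝕜] [DecidableEq n]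
    {A : Matrix n n 𝕜} (hA : A.PosSemidef) : Matrix n n 𝕜 :=
  hA.1.eigenvectorUnitary.1 * diagonal ((↑) ∘ (√·) ∘ hA.1.eigenvalues) *
    (star hA.1.eigenvectorUnitary : Matrix n n 𝕜)

lemma Matrix.PosSemidef.isHermitian_sqrt {n 𝕜 : Type*} [Fintype n] [RCLike 𝕜] [DecidableEq n]
    {A : Matrix n n 𝕜} (hA : A.PosSemidef) : (hA.sqrt)ᴴ = hA.sqrt := by
  unfold Matrix.PosSemidef.sqrt
  simp [conjTranspose_mul, Matrix.mul_assoc, diagonal_conjTranspose, Function.comp_def,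
    star_eq_conjTranspose, Pi.star_def, RCLike.star_def, RCLike.conj_ofReal]

lemma Matrix.PosSemidef.sqrt_mul_self {n 𝕜 : Type*} [Fintype n] [RCLike 𝕜] [DecidableEq n]
    {A : Matrix n n 𝕜} (hA : A.PosSemidef) : hA.sqrt * hA.sqrt = A := by
  unfold Matrix.PosSemidef.sqrt
  have hU : (star hA.1.eigenvectorUnitary : Matrix n n 𝕜) * hA.1.eigenvectorUnitary.1 = 1 :=
    Unitary.coe_star_mul_self _
  have hD : diagonal ((↑) ∘ (√·) ∘ hA.1.eigenvalues) * diagonal ((↑) ∘ (√·) ∘ hA.1.eigenvalues)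
      = diagonal (RCLike.ofReal ∘ hA.1.eigenvalues : n → 𝕜) := by
    rw [diagonal_mul_diagonal]
    congr 1
    funext i
    simp only [Function.comp_apply]
    rw [← RCLike.ofReal_mul, Real.mul_self_sqrt (hA.eigenvalues_nonneg i)]
  conv_rhs => rw [hA.1.spectral_theorem]
  rw [Unitary.conjStarAlgAut_apply]
  calc _ = hA.1.eigenvectorUnitary.1 * (diagonal ((↑) ∘ (√·) ∘ hA.1.eigenvalues) *
        ((star hA.1.eigenvectorUnitary : Matrix n n 𝕜) * hA.1.eigenvectorUnitary.1) *
        diagonal ((↑) ∘ (√·) ∘ hA.1.eigenvalues)) *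
        (star hA.1.eigenvectorUnitary : Matrix n n 𝕜) := by simp only [Matrix.mul_assoc]
    _ = _ := by rw [hU, Matrix.mul_one, hD]

lemma idblock {a n : ℕ} (h : a ≤ n) :
    (Matrix.of fun (i : Fin n) (j : Fin a) => if (i : ℕ) = (j : ℕ) then (1:ℂ) else 0)ᴴ *
      (Matrix.of fun (i : Fin n) (j : Fin a) => if (i : ℕ) = (j : ℕ) then (1:ℂ) else 0) = 1 := by
  ext j k
  simp only [Matrix.mul_apply, conjTranspose_apply, Matrix.of_apply, one_apply,
    apply_ite (star : ℂ → ℂ), star_one, star_zero]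
  rw [Finset.sum_eq_single (⟨(j : ℕ), lt_of_lt_of_le j.2 h⟩ : Fin n)]
  · simp [Fin.ext_iff]
  · intro b _ hb
    simp only [ite_mul, one_mul, zero_mul, ite_eq_right_iff]
    intro hbj
    exfalso; exact hb (by simpa [Fin.ext_iff] using hbj)
  · simp

lemma idblock' {a n : ℕ} (h : a ≤ n) :
    (Matrix.of fun (i : Fin a) (j : Fin n) => if (i : ℕ) = (j : ℕ) then (1:ℂ) else 0) *
      (Matrix.of fun (i : Fin a) (j : Fin n) => if (i : ℕ) = (j : ℕ) then (1:ℂ) else 0)ᴴ = 1 := by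
  ext j k
  simp only [Matrix.mul_apply, conjTranspose_apply, Matrix.of_apply, one_apply,
    apply_ite (star : ℂ → ℂ), star_one, star_zero]
  rw [Finset.sum_eq_single (⟨(j : ℕ), lt_of_lt_of_le j.2 h⟩ : Fin n)]
  · simp [Fin.ext_iff, eq_comm]
  · intro b _ hb
    simp only [ite_mul, one_mul, zero_mul, ite_eq_right_iff]
    intro hbj
    exfalso; exact hb (by simpa [Fin.ext_iff, eq_comm] using hbj)
  · simp

lemma posDef_conj_of_inj {n m : Type*} [Fintype n] [Fintype m] [DecidableEq n] [DecidableEq m]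
    {M : Matrix n n ℂ} (hM : M.PosDef) (B : Matrix n m ℂ)
    (hB : ∀ x, B *ᵥ x = 0 → x = 0) : (Bᴴ * M * B).PosDef := by
  exact hM.conjTranspose_mul_mul_same
    (fun x y hxy => sub_eq_zero.mp (hB _ (by rw [mulVec_sub, hxy, sub_self])))

lemma posDef_real_smul {n : Type*} [Fintype n] [DecidableEq n]
    {M : Matrix n n ℂ} (hM : M.PosDef) {c : ℝ} (hc : 0 < c) : ((c : ℂ) • M).PosDef := by
  exact hM.smul (a := (c:ℂ)) (by exact_mod_cast hc)
  /-
  · show ((c:ℂ) • M)ᴴ = _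
    rw [conjTranspose_smul, hM.1.eq]
    simp [Complex.star_def, Complex.conj_ofReal]
  · have h := hM.2 x hx
    rw [smul_mulVec_assoc, dotProduct_smul, smul_eq_mul]
    rw [Complex.pos_iff] at h ⊢
    constructor
    · simp only [Complex.mul_re, Complex.ofReal_re, Complex.ofReal_im, zero_mul, sub_zero]
      exact mul_pos hc h.1
    · simp only [Complex.mul_im, Complex.ofReal_re, Complex.ofReal_im, zero_mul, add_zero]
      rw [← h.2]; ring
  -/

/-- projector is hermitian -/
lemma proj_conjTranspose {n m : Type*} [Fintype n] [Fintype m] [DecidableEq n] [DecidableEq m]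
    (F : Matrix n m ℂ) :
    (F * (Fᴴ * F)⁻¹ * Fᴴ)ᴴ = F * (Fᴴ * F)⁻¹ * Fᴴ := by
  have h1 : ((Fᴴ * F)⁻¹)ᴴ = (Fᴴ * F)⁻¹ := by
    rw [conjTranspose_nonsing_inv, (isHermitian_conjTranspose_mul_self F).eq]
  simp [conjTranspose_mul, h1, Matrix.mul_assoc]

set_option maxHeartbeats 2000000 in
/-- Eq. (R1) of the paper: `R̂₀^{-1/2} Z_{d,0} P_{Cᴴ} = P_{Ā₀}^⊥ Z_{W0} P_{Cᴴ}`,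
where `R̂₀` is Hermitian positive definite. -/
theorem rao_whitening_identity
    (N K M t r : ℕ) (hN : 0 < N) (hK : 0 < K) (hM : 0 < M) (ht : 0 < t) (hr : 0 < r)
    (hJ : t + r ≤ N) (hMK : M ≤ K)
    (Sc : Matrix (Fin N) (Fin N) ℂ) (hS : Sc.PosDef)
    (Z : Matrix (Fin N) (Fin K) ℂ) :
    let Et : Matrix (Fin N) (Fin t) ℂ := Matrix.of fun i j => if (i : ℕ) = (j : ℕ) then 1 else 0
    let C : Matrix (Fin M) (Fin K) ℂ := Matrix.of fun i j => if (i : ℕ) = (j : ℕ) then 1 else 0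
    let PC : Matrix (Fin K) (Fin K) ℂ := Cᴴ * (C * Cᴴ)⁻¹ * C
    let Shalf : Matrix (Fin N) (Fin N) ℂ := hS.posSemidef.sqrt
    let ZW1 : Matrix (Fin N) (Fin K) ℂ := Shalf⁻¹ * Z
    let A0 : Matrix (Fin N) (Fin t) ℂ := Shalf⁻¹ * Et
    let R0 : Matrix (Fin N) (Fin N) ℂ :=
      ((K : ℂ))⁻¹ • (Sc + Shalf * projPerp A0 * ZW1 * PC * ZW1ᴴ * projPerp A0 * Shalf)
    let Zd0 : Matrix (Fin N) (Fin K) ℂ := Z - Shalf * proj A0 * Shalf⁻¹ * Z * PC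
    ∃ h0 : R0.PosDef,
      (h0.posSemidef.sqrt)⁻¹ * Zd0 * PC =
        projPerp ((h0.posSemidef.sqrt)⁻¹ * Et) * ((h0.posSemidef.sqrt)⁻¹ * Z) * PC := by
  intro Et C PC Shalf ZW1 A0 R0 Zd0
  have htN : t ≤ N := le_trans (Nat.le_add_right t r) hJ
  have hEt : Etᴴ * Et = 1 := idblock htN
  have hCC : C * Cᴴ = 1 := idblock' hMK
  have hPC : PC = Cᴴ * C := by
    show Cᴴ * (C * Cᴴ)⁻¹ * C = Cᴴ * C
    rw [hCC, inv_one, Matrix.mul_one]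
  have hPC2 : PC * PC = PC := by
    rw [hPC, Matrix.mul_assoc, ← Matrix.mul_assoc C, hCC, Matrix.one_mul]
  -- facts about Shalf
  have hShh : Shalfᴴ = Shalf := hS.posSemidef.isHermitian_sqrt
  have hSS : Shalf * Shalf = Sc := hS.posSemidef.sqrt_mul_self
  have hdS : IsUnit Shalf.det := by
    have hd : Shalf.det * Shalf.det = Sc.det := by rw [← det_mul, hSS]
    have : Sc.det ≠ 0 := ne_of_gt hS.det_pos
    refine isUnit_iff_ne_zero.mpr fun h => this ?_
    rw [← hd, h, mul_zero]
  have hS1 : Shalf * Shalf⁻¹ = 1 := mul_nonsing_inv _ hdS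
  have hS2 : Shalf⁻¹ * Shalf = 1 := nonsing_inv_mul _ hdS
  have hScinv : Sc⁻¹ = Shalf⁻¹ * Shalf⁻¹ := by rw [← hSS, Matrix.mul_inv_rev]
  have hShinvH : (Shalf⁻¹)ᴴ = Shalf⁻¹ := by rw [conjTranspose_nonsing_inv, hShh]
  have hScInvH : (Sc⁻¹)ᴴ = Sc⁻¹ := hS.inv.1
  have hA0H : A0ᴴ = Etᴴ * Shalf⁻¹ := by
    show (Shalf⁻¹ * Et)ᴴ = _
    rw [conjTranspose_mul, hShinvH]
  have hG : A0ᴴ * A0 = Etᴴ * Sc⁻¹ * Et := by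
    show A0ᴴ * (Shalf⁻¹ * Et) = _
    rw [hA0H, hScinv, Matrix.mul_assoc, Matrix.mul_assoc, Matrix.mul_assoc]
  set G : Matrix (Fin t) (Fin t) ℂ := Etᴴ * Sc⁻¹ * Et with hGdef
  have hEtInj : ∀ x : Fin t → ℂ, Et *ᵥ x = 0 → x = 0 := by
    intro x hx
    have : (Etᴴ * Et) *ᵥ x = 0 := by rw [← Matrix.mulVec_mulVec, hx, Matrix.mulVec_zero]
    rwa [hEt, Matrix.one_mulVec] at this
  have hGpd : G.PosDef := posDef_conj_of_inj hS.inv Et hEtInj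
  have hGu : IsUnit G.det := (Matrix.isUnit_iff_isUnit_det _).mp hGpd.isUnit
  have hGinv1 : G⁻¹ * G = 1 := nonsing_inv_mul _ hGu
  have hGinv2 : G * G⁻¹ = 1 := mul_nonsing_inv _ hGu
  have hprojA0 : proj A0 * A0 = A0 := by
    show A0 * (A0ᴴ * A0)⁻¹ * A0ᴴ * A0 = A0
    have hGA : (A0ᴴ * A0)⁻¹ * (A0ᴴ * A0) = 1 :=
      nonsing_inv_mul _ (by rw [hG]; exact hGu)
    rw [Matrix.mul_assoc, Matrix.mul_assoc, hGA, Matrix.mul_one]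
  have hQA0 : projPerp A0 * A0 = 0 := by
    rw [projPerp, Matrix.sub_mul, Matrix.one_mul, hprojA0, sub_self]
  have hQH : (projPerp A0)ᴴ = projPerp A0 := by
    rw [projPerp, conjTranspose_sub, conjTranspose_one, proj, proj_conjTranspose]
  -- W PSD
  set W : Matrix (Fin N) (Fin N) ℂ :=
    Shalf * projPerp A0 * ZW1 * PC * ZW1ᴴ * projPerp A0 * Shalf with hWdef
  have hWpsd : W.PosSemidef := by
    have hPCpsd : PC.PosSemidef := by rw [hPC]; exact posSemidef_conjTranspose_mul_self C
    have h := hPCpsd.mul_mul_conjTranspose_same (Shalf * projPerp A0 * ZW1)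
    have he : Shalf * projPerp A0 * ZW1 * PC * (Shalf * projPerp A0 * ZW1)ᴴ = W := by
      rw [hWdef]
      simp only [conjTranspose_mul, hQH, hShh, Matrix.mul_assoc]
    rwa [he] at h
  have h0 : R0.PosDef := by
    have hpd : (Sc + W).PosDef := hS.add_posSemidef hWpsd
    have hc : (0:ℝ) < (K:ℝ)⁻¹ := by positivity
    have := posDef_real_smul hpd hc
    show (((K:ℂ))⁻¹ • (Sc + W)).PosDef
    rwa [show ((K:ℂ))⁻¹ = (((K:ℝ)⁻¹ : ℝ) : ℂ) by push_cast; ring]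
  refine ⟨h0, ?_⟩
  -- facts about B = sqrt R0
  set B : Matrix (Fin N) (Fin N) ℂ := h0.posSemidef.sqrt with hBdef
  have hBh : Bᴴ = B := h0.posSemidef.isHermitian_sqrt
  have hBB : B * B = R0 := h0.posSemidef.sqrt_mul_self
  have hdB : IsUnit B.det := by
    have hd : B.det * B.det = R0.det := by rw [← det_mul, hBB]
    have : R0.det ≠ 0 := ne_of_gt h0.det_pos
    refine isUnit_iff_ne_zero.mpr fun h => this ?_
    rw [← hd, h, mul_zero]
  have hB1 : B * B⁻¹ = 1 := mul_nonsing_inv _ hdB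
  have hB2 : B⁻¹ * B = 1 := nonsing_inv_mul _ hdB
  have hBinvH : (B⁻¹)ᴴ = B⁻¹ := by rw [conjTranspose_nonsing_inv, hBh]
  have hKne : (K:ℂ) ≠ 0 := Nat.cast_ne_zero.mpr hK.ne'
  -- W kills Sc⁻¹ Et
  have hSA : Shalf * (Sc⁻¹ * Et) = A0 := by
    show _ = Shalf⁻¹ * Et
    rw [hScinv, Matrix.mul_assoc, ← Matrix.mul_assoc Shalf, hS1, Matrix.one_mul]
  have hWEt : W * (Sc⁻¹ * Et) = 0 := by
    rw [hWdef]
    simp only [Matrix.mul_assoc]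
    rw [hSA, hQA0]
    simp only [Matrix.mul_zero]
  have hR0Et : R0 * (Sc⁻¹ * Et) = (K:ℂ)⁻¹ • Et := by
    show ((K:ℂ))⁻¹ • (Sc + W) * (Sc⁻¹ * Et) = _
    rw [Matrix.smul_mul, Matrix.add_mul, hWEt, add_zero, ← Matrix.mul_assoc,
      mul_nonsing_inv _ ((Matrix.isUnit_iff_isUnit_det _).mp hS.isUnit), Matrix.one_mul]
  -- key : B⁻¹ B⁻¹ Et = K • Sc⁻¹ Et
  have e1 : B * (Sc⁻¹ * Et) = (K:ℂ)⁻¹ • (B⁻¹ * Et) := by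
    have h := congrArg (fun X => B⁻¹ * X) (show B * (B * (Sc⁻¹ * Et)) = (K:ℂ)⁻¹ • Et by
      rw [← Matrix.mul_assoc, hBB, hR0Et])
    simpa only [← Matrix.mul_assoc, hB2, Matrix.one_mul, Matrix.mul_smul] using h
  have e2 : Sc⁻¹ * Et = (K:ℂ)⁻¹ • (B⁻¹ * (B⁻¹ * Et)) := by
    have h := congrArg (fun X => B⁻¹ * X) e1
    simpa only [← Matrix.mul_assoc, hB2, Matrix.one_mul, Matrix.mul_smul] using h
  have hkey : B⁻¹ * (B⁻¹ * Et) = (K:ℂ) • (Sc⁻¹ * Et) := by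
    rw [e2, smul_smul, mul_inv_cancel₀ hKne, one_smul]
  have hEtB : Etᴴ * B⁻¹ * B⁻¹ = (K:ℂ) • (Etᴴ * Sc⁻¹) := by
    simpa only [conjTranspose_mul, conjTranspose_smul, hBinvH, hScInvH, star_natCast,
      ← Matrix.mul_assoc] using congrArg conjTranspose hkey
  have hGbar : ((B⁻¹ * Et)ᴴ * (B⁻¹ * Et)) = (K:ℂ) • G := by
    rw [conjTranspose_mul, hBinvH, ← Matrix.mul_assoc, hEtB, Matrix.smul_mul, ← hGdef]
  have hGbarInv : ((B⁻¹ * Et)ᴴ * (B⁻¹ * Et))⁻¹ = (K:ℂ)⁻¹ • G⁻¹ := by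
    rw [hGbar]
    apply Matrix.inv_eq_right_inv
    rw [Matrix.smul_mul, Matrix.mul_smul, hGinv2, smul_smul, mul_inv_cancel₀ hKne, one_smul]
  -- the projector composition
  have hSprojS : Shalf * proj A0 * Shalf⁻¹ = Et * G⁻¹ * (Etᴴ * Sc⁻¹) := by
    show Shalf * (A0 * (A0ᴴ * A0)⁻¹ * A0ᴴ) * Shalf⁻¹ = _
    rw [hG, hA0H]
    show Shalf * (Shalf⁻¹ * Et * G⁻¹ * (Etᴴ * Shalf⁻¹)) * Shalf⁻¹ = _
    rw [hScinv]
    simp only [← Matrix.mul_assoc, hS1, Matrix.one_mul]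
  -- LHS
  have hLHS : B⁻¹ * Zd0 * PC
      = B⁻¹ * Z * PC - B⁻¹ * (Et * (G⁻¹ * (Etᴴ * (Sc⁻¹ * (Z * PC))))) := by
    show B⁻¹ * (Z - Shalf * proj A0 * Shalf⁻¹ * Z * PC) * PC = _
    rw [Matrix.mul_sub, Matrix.sub_mul, hSprojS]
    congr 1
    simp only [Matrix.mul_assoc]
    rw [hPC2]
  -- RHS
  have hmid : Etᴴ * (B⁻¹ * (B⁻¹ * (Z * PC))) = (K:ℂ) • (Etᴴ * (Sc⁻¹ * (Z * PC))) := by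
    simpa only [Matrix.smul_mul, Matrix.mul_assoc] using congrArg (fun X => X * (Z * PC)) hEtB
  have hproj2 : proj (B⁻¹ * Et) * (B⁻¹ * (Z * PC))
      = B⁻¹ * (Et * (G⁻¹ * (Etᴴ * (Sc⁻¹ * (Z * PC))))) := by
    rw [proj, hGbarInv, conjTranspose_mul, hBinvH]
    simp only [Matrix.smul_mul, Matrix.mul_smul, Matrix.mul_assoc]
    rw [hmid]
    simp only [Matrix.mul_smul, smul_smul, inv_mul_cancel₀ hKne, one_smul]
  have hRHS : projPerp (B⁻¹ * Et) * (B⁻¹ * Z) * PC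
      = B⁻¹ * Z * PC - B⁻¹ * (Et * (G⁻¹ * (Etᴴ * (Sc⁻¹ * (Z * PC))))) := by
    rw [projPerp, Matrix.sub_mul, Matrix.sub_mul, Matrix.one_mul]
    congr 1
    rw [Matrix.mul_assoc (proj (B⁻¹ * Et)), Matrix.mul_assoc B⁻¹ Z PC]
    exact hproj2
  rw [hLHS, hRHS]
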